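/- Let G be a group containing elements σ, δ, s, r such that σδ = δσ, σ⁻¹rσ = δ⁻¹rδ, and σ⁻¹sσ = s. Then for all n ≥ 0, σ⁻ⁿ(δ⁻ⁿsδⁿr)ⁿσⁿ = δ⁻ⁿ(sr)ⁿδⁿ in G. -/
import Mathlib

private lemma conj_comm_aux {G : Type*} [Group G] (a b x : G) (h : a * b = b * a) :
    a⁻¹ * (b⁻¹ * x * b) * a = b⁻¹ * (a⁻¹ * x * a) * b := by
  have h1 : a⁻¹ * b⁻¹ = b⁻¹ * a⁻¹ := by rw [← mul_inv_rev, ← mul_inv_rev, h]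
  calc a⁻¹ * (b⁻¹ * x * b) * a = (a⁻¹ * b⁻¹) * x * (b * a) := by group
    _ = (b⁻¹ * a⁻¹) * x * (a * b) := by rw [h1, ← h]
    _ = b⁻¹ * (a⁻¹ * x * a) * b := by group

private lemma conj_pow_aux {G : Type*} [Group G] (a b : G) (n : ℕ) :
    (a⁻¹ * b * a) ^ n = a⁻¹ * b ^ n * a := by
  induction n with
  | zero => simp
  | succ k ih => rw [pow_succ, pow_succ, ih]; group

theorem stmt_1 {G : Type*} [Group G] (σ δ s r : G)
    (h1 : σ * δ = δ * σ) (h2 : σ⁻¹ * r * σ = δ⁻¹ * r * δ) (h3 : σ⁻¹ * s * σ = s) :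
    ∀ n : ℕ, (σ ^ n)⁻¹ * ((δ ^ n)⁻¹ * s * δ ^ n * r) ^ n * σ ^ n
      = (δ ^ n)⁻¹ * (s * r) ^ n * δ ^ n := by
  have hcd : Commute σ δ := h1
  have hs : ∀ m : ℕ, (σ ^ m)⁻¹ * s * σ ^ m = s := by
    intro m
    induction m with
    | zero => simp
    | succ k ih =>
      rw [pow_succ']
      rw [show (σ * σ ^ k)⁻¹ * s * (σ * σ ^ k)
          = (σ ^ k)⁻¹ * (σ⁻¹ * s * σ) * σ ^ k by group, h3, ih]
  have hr : ∀ m : ℕ, (σ ^ m)⁻¹ * r * σ ^ m = (δ ^ m)⁻¹ * r * δ ^ m := by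
    intro m
    induction m with
    | zero => simp
    | succ k ih =>
      have c1 : σ ^ k * δ = δ * σ ^ k := (hcd.pow_left k).eq
      calc (σ ^ (k+1))⁻¹ * r * σ ^ (k+1)
          = (σ ^ k)⁻¹ * (σ⁻¹ * r * σ) * σ ^ k := by rw [pow_succ']; group
        _ = (σ ^ k)⁻¹ * (δ⁻¹ * r * δ) * σ ^ k := by rw [h2]
        _ = δ⁻¹ * ((σ ^ k)⁻¹ * r * σ ^ k) * δ := conj_comm_aux _ _ _ c1
        _ = δ⁻¹ * ((δ ^ k)⁻¹ * r * δ ^ k) * δ := by rw [ih]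
        _ = (δ ^ (k+1))⁻¹ * r * δ ^ (k+1) := by rw [pow_succ']; group
  intro n
  have cn : σ ^ n * δ ^ n = δ ^ n * σ ^ n := (hcd.pow_pow n n).eq
  have hX : (σ ^ n)⁻¹ * ((δ ^ n)⁻¹ * s * δ ^ n * r) * σ ^ n
      = (δ ^ n)⁻¹ * (s * r) * δ ^ n := by
    calc (σ ^ n)⁻¹ * ((δ ^ n)⁻¹ * s * δ ^ n * r) * σ ^ n
        = ((σ ^ n)⁻¹ * ((δ ^ n)⁻¹ * s * δ ^ n) * σ ^ n)
            * ((σ ^ n)⁻¹ * r * σ ^ n) := by group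
      _ = ((δ ^ n)⁻¹ * ((σ ^ n)⁻¹ * s * σ ^ n) * δ ^ n)
            * ((δ ^ n)⁻¹ * r * δ ^ n) := by rw [conj_comm_aux _ _ _ cn, hr n]
      _ = ((δ ^ n)⁻¹ * s * δ ^ n) * ((δ ^ n)⁻¹ * r * δ ^ n) := by rw [hs n]
      _ = (δ ^ n)⁻¹ * (s * r) * δ ^ n := by group
  calc (σ ^ n)⁻¹ * ((δ ^ n)⁻¹ * s * δ ^ n * r) ^ n * σ ^ n
      = ((σ ^ n)⁻¹ * ((δ ^ n)⁻¹ * s * δ ^ n * r) * σ ^ n) ^ n := (conj_pow_aux _ _ n).symm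
    _ = ((δ ^ n)⁻¹ * (s * r) * δ ^ n) ^ n := by rw [hX]
    _ = (δ ^ n)⁻¹ * (s * r) ^ n * δ ^ n := conj_pow_aux _ _ n
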